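/- In the variety of inverse semigroups, if a unary term u(x) satisfies the identity u(u(x)) = x, then u(x) is one of x, x⁻¹, or an expression equal to x; in particular the only involutive unary term not equal to the identity is x ↦ x⁻¹. -/

import Mathlib

/-- An inverse semigroup: a semigroup with a unary inversion satisfying
`(xy)⁻¹ = y⁻¹x⁻¹`, `(x⁻¹)⁻¹ = x`, `x x⁻¹ x = x`, and
`x⁻¹x y⁻¹y = y⁻¹y x⁻¹x`. -/
class InverseSemigroup (M : Type u) extends Semigroup M where
  inv : M → M
  inv_mul : ∀ a b : M, inv (a * b) = inv b * inv a
  inv_inv : ∀ a : M, inv (inv a) = a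
  mul_inv_mul : ∀ a : M, a * inv a * a = a
  idem_comm : ∀ a b : M, inv a * a * (inv b * b) = inv b * b * (inv a * a)

/-- Unary terms `u(x)` in the language of inverse semigroups. -/
inductive InvTerm1 : Type
  | x : InvTerm1
  | mul : InvTerm1 → InvTerm1 → InvTerm1
  | inv : InvTerm1 → InvTerm1

/-- Evaluation of a unary term `u(x)` in an inverse semigroup at `x := a`. -/
def InvTerm1.eval {M : Type u} [InverseSemigroup M] (a : M) : InvTerm1 → M
  | .x => a
  | .mul s t => InvTerm1.eval a s * InvTerm1.eval a t
  | .inv t => InverseSemigroup.inv (InvTerm1.eval a t)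

namespace Stmt18
open InverseSemigroup

variable {M : Type*} [InverseSemigroup M]

local notation "iv" => InverseSemigroup.inv

/-- `pw a n x = a^n * x` -/
def pw (a : M) : ℕ → M → M
  | 0, x => x
  | n+1, x => a * pw a n x

/-- `ppow a n = a^(n+1)` -/
def ppow (a : M) (n : ℕ) : M := pw a n a

/-- `qw x a n = x * a^n` -/
def qw (x a : M) : ℕ → M
  | 0 => x
  | n+1 => qw x a n * a

lemma pw_mul (a : M) (n : ℕ) (x y : M) : pw a n x * y = pw a n (x * y) := by
  induction n with
  | zero => rfl
  | succ n ih => show (a * pw a n x) * y = a * pw a n (x * y); rw [mul_assoc, ih]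

lemma pw_inner (a : M) (n : ℕ) (x : M) : a * pw a n x = pw a n (a * x) := by
  induction n with
  | zero => rfl
  | succ n ih => show a * (a * pw a n x) = a * pw a n (a * x); rw [ih]

lemma ppow_succ (a : M) (n : ℕ) : ppow a (n+1) = a * ppow a n := rfl

lemma ppow_succ' (a : M) (n : ℕ) : ppow a (n+1) = ppow a n * a := by
  unfold ppow
  rw [show pw a (n+1) a = a * pw a n a from rfl, pw_inner, ← pw_mul]

lemma ppow_add (a : M) (p q : ℕ) : ppow a (p+q+1) = ppow a p * ppow a q := by
  induction p with
  | zero =>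
    show ppow a (0+q+1) = ppow a 0 * ppow a q
    rw [Nat.zero_add]
    exact ppow_succ a q
  | succ p ih =>
    have hidx : p+1+q+1 = (p+q+1)+1 := by omega
    rw [hidx, ppow_succ, ih, ppow_succ, mul_assoc]

lemma bab (a : M) : iv a * a * iv a = iv a := by
  have := mul_inv_mul (iv a)
  rwa [InverseSemigroup.inv_inv] at this

lemma inv_ppow (a : M) (n : ℕ) : iv (ppow a n) = ppow (iv a) n := by
  induction n with
  | zero => rfl
  | succ n ih => rw [ppow_succ, inv_mul, ih, ← ppow_succ']

lemma ab_comm (a y : M) : (a * iv a) * (iv y * y) = (iv y * y) * (a * iv a) := by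
  have h1 : a * iv a = iv (iv a) * iv a := by rw [InverseSemigroup.inv_inv]
  rw [h1]
  exact idem_comm (iv a) y

lemma step0 (a : M) (K : ℕ) : ppow (iv a) K * (a * iv a) = ppow (iv a) K := by
  cases K with
  | zero => show iv a * (a * iv a) = iv a; rw [← mul_assoc]; exact bab a
  | succ K =>
    rw [ppow_succ', mul_assoc]
    have : iv a * (a * iv a) = iv a := by rw [← mul_assoc]; exact bab a
    rw [this]

lemma qw_eq (x a : M) (n : ℕ) : qw x a (n+1) = x * ppow a n := by
  induction n with
  | zero => rfl
  | succ n ih =>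
    show qw x a (n+1) * a = x * ppow a (n+1)
    rw [ih, ppow_succ', mul_assoc]

lemma II' (a : M) (i K : ℕ) (hiK : i ≤ K) :
    qw (ppow (iv a) K) a i * (a * iv a) = qw (ppow (iv a) K) a i := by
  cases i with
  | zero => exact step0 a K
  | succ i =>
    rw [qw_eq]
    obtain ⟨p, hp⟩ : ∃ p, K = p + i + 1 := ⟨K - i - 1, by omega⟩
    subst hp
    rw [ppow_add]
    have hF : ppow (iv a) i * ppow a i = iv (ppow a i) * ppow a i := by rw [inv_ppow]
    calc ppow (iv a) p * ppow (iv a) i * ppow a i * (a * iv a)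
        = ppow (iv a) p * ((ppow (iv a) i * ppow a i) * (a * iv a)) := by
          simp only [mul_assoc]
      _ = ppow (iv a) p * ((iv (ppow a i) * ppow a i) * (a * iv a)) := by rw [hF]
      _ = ppow (iv a) p * ((a * iv a) * (iv (ppow a i) * ppow a i)) := by rw [← ab_comm]
      _ = (ppow (iv a) p * (a * iv a)) * (iv (ppow a i) * ppow a i) :=
          (mul_assoc _ _ _).symm
      _ = ppow (iv a) p * (iv (ppow a i) * ppow a i) := by rw [step0]
      _ = ppow (iv a) p * ppow (iv a) i * ppow a i := by rw [← hF, mul_assoc]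

lemma Istar (a : M) (K : ℕ) :
    a * (ppow (iv a) (K+1) * ppow a (K+1)) = ppow (iv a) K * ppow a (K+1) := by
  have hE : ppow (iv a) K * ppow a K = iv (ppow a K) * ppow a K := by rw [inv_ppow]
  have habE : (a * iv a) * (ppow (iv a) K * ppow a K)
      = (ppow (iv a) K * ppow a K) * (a * iv a) := by
    rw [hE]; exact ab_comm a (ppow a K)
  calc a * (ppow (iv a) (K+1) * ppow a (K+1))
      = a * ((iv a * ppow (iv a) K) * (ppow a K * a)) := by rw [ppow_succ, ppow_succ']
    _ = (a * iv a) * (ppow (iv a) K * ppow a K) * a := by simp only [mul_assoc]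
    _ = (ppow (iv a) K * ppow a K) * (a * iv a) * a := by rw [habE]
    _ = (ppow (iv a) K * ppow a K) * (a * iv a * a) := by rw [mul_assoc]
    _ = (ppow (iv a) K * ppow a K) * a := by rw [mul_inv_mul]
    _ = ppow (iv a) K * ppow a (K+1) := by rw [ppow_succ', mul_assoc]


/-- `canonN a Mn k j = a^Mn * (a⁻¹)^(k+1) * a^j` -/
def canonN (a : M) (Mn k j : ℕ) : M := qw (pw a Mn (ppow (iv a) k)) a j

lemma qw_pw (a : M) (n j : ℕ) (y : M) : qw (pw a n y) a j = pw a n (qw y a j) := by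
  induction j with
  | zero => rfl
  | succ j ih =>
    show qw (pw a n y) a j * a = pw a n (qw y a j * a)
    rw [ih, pw_mul]

lemma stepA1 (a : M) (Mn k j : ℕ) : canonN a Mn k j * a = canonN a Mn k (j+1) := rfl

lemma stepA2 (a : M) (Mn k : ℕ) :
    canonN a Mn k (k+1) * a = canonN a (Mn+1) (k+1) (k+2) := by
  show canonN a Mn k (k+2) = canonN a (Mn+1) (k+1) (k+2)
  unfold canonN
  rw [qw_eq, qw_eq, pw_mul, pw_mul]
  show pw a Mn (ppow (iv a) k * ppow a (k+1)) =
    a * pw a Mn (ppow (iv a) (k+1) * ppow a (k+1))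
  rw [pw_inner, Istar]

lemma stepB1 (a : M) (Mn k i : ℕ) (hik : i ≤ k) :
    canonN a Mn k (i+1) * iv a = canonN a Mn k i := by
  unfold canonN
  rw [qw_pw, qw_pw, pw_mul]
  congr 1
  show (qw (ppow (iv a) k) a i * a) * iv a = qw (ppow (iv a) k) a i
  rw [mul_assoc]
  exact II' a i k hik

lemma stepB2 (a : M) (Mn k : ℕ) :
    canonN a Mn k 0 * iv a = canonN a Mn (k+1) 0 := by
  unfold canonN
  show pw a Mn (ppow (iv a) k) * iv a = pw a Mn (ppow (iv a) (k+1))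
  rw [pw_mul, ppow_succ']

/-! ### Words -/

def letter (a : M) : Bool → M
  | true => a
  | false => iv a

def wprod (a : M) : List Bool → M
  | [] => a
  | c :: l => l.foldl (fun p c => p * letter a c) (letter a c)

lemma foldl_letter_shift (a : M) (l : List Bool) (x y : M) :
    l.foldl (fun p c => p * letter a c) (x * y) =
      x * l.foldl (fun p c => p * letter a c) y := by
  induction l generalizing y with
  | nil => rfl
  | cons c l ih =>
    show l.foldl _ ((x * y) * letter a c) = x * l.foldl _ (y * letter a c)
    rw [mul_assoc, ih]

lemma wprod_append (a : M) (l₁ l₂ : List Bool) (h₁ : l₁ ≠ []) (h₂ : l₂ ≠ []) :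
    wprod a (l₁ ++ l₂) = wprod a l₁ * wprod a l₂ := by
  obtain ⟨c, l, rfl⟩ : ∃ c l, l₁ = c :: l := by
    cases l₁ with
    | nil => exact absurd rfl h₁
    | cons c l => exact ⟨c, l, rfl⟩
  obtain ⟨c₂, l₂', rfl⟩ : ∃ c l', l₂ = c :: l' := by
    cases l₂ with
    | nil => exact absurd rfl h₂
    | cons c l => exact ⟨c, l, rfl⟩
  show (l ++ c₂ :: l₂').foldl (fun p c => p * letter a c) (letter a c)
      = wprod a (c :: l) * wprod a (c₂ :: l₂')
  rw [List.foldl_append]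
  show (c₂ :: l₂').foldl (fun p c => p * letter a c) (wprod a (c :: l)) = _
  show l₂'.foldl (fun p c => p * letter a c) (wprod a (c :: l) * letter a c₂) = _
  rw [foldl_letter_shift]
  rfl


lemma wprod_concat (a : M) (l : List Bool) (c : Bool) (h : l ≠ []) :
    wprod a (l ++ [c]) = wprod a l * letter a c := by
  rw [wprod_append a l [c] h (by simp)]
  rfl

lemma wprod_cons (a : M) (c : Bool) (l : List Bool) (h : l ≠ []) :
    wprod a (c :: l) = letter a c * wprod a l := by
  have := wprod_append a [c] l (by simp) h
  exact this

lemma inv_letter (a : M) (c : Bool) : iv (letter a c) = letter a (!c) := by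
  cases c
  · exact InverseSemigroup.inv_inv a
  · rfl

lemma inv_wprod (a : M) : ∀ l : List Bool, l ≠ [] →
    iv (wprod a l) = wprod a (l.reverse.map (fun c => !c)) := by
  intro l
  induction l using List.reverseRecOn with
  | nil => intro h; exact absurd rfl h
  | append_singleton l c ih =>
    intro _
    rcases eq_or_ne l [] with rfl | hl
    · simp only [List.nil_append, List.reverse_cons, List.reverse_nil, List.map]
      exact inv_letter a c
    · rw [wprod_concat a l c hl, inv_mul, inv_letter, ih hl]
      rw [List.reverse_append, List.map_append]
      simp only [List.reverse_cons, List.reverse_nil, List.nil_append, List.map,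
        List.singleton_append]
      rw [wprod_cons a (!c) _ (by simp [hl])]


/-! ### Data triples -/

def stp (p : ℤ × ℤ × ℤ) : Bool → ℤ × ℤ × ℤ
  | true => (p.1, p.2.1 + 1, max p.2.2 (p.2.1 + 1))
  | false => (min p.1 (p.2.1 - 1), p.2.1 - 1, p.2.2)

def wdata (l : List Bool) : ℤ × ℤ × ℤ := l.foldl stp (0, 0, 0)

def Valid (p : ℤ × ℤ × ℤ) : Prop :=
  p.1 ≤ 0 ∧ 0 ≤ p.2.2 ∧ p.1 ≤ p.2.1 ∧ p.2.1 ≤ p.2.2 ∧ p.1 < p.2.2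

lemma wdata_concat (l : List Bool) (c : Bool) :
    wdata (l ++ [c]) = stp (wdata l) c := by
  simp [wdata]

lemma valid_stp {p : ℤ × ℤ × ℤ} (hp : Valid p) (c : Bool) : Valid (stp p c) := by
  obtain ⟨h1, h2, h3, h4, h5⟩ := hp
  cases c <;> simp [stp, Valid] <;> omega

lemma valid_wdata : ∀ l : List Bool, l ≠ [] → Valid (wdata l) := by
  intro l
  induction l using List.reverseRecOn with
  | nil => intro h; exact absurd rfl h
  | append_singleton l c ih =>
    intro _
    rw [wdata_concat]
    rcases eq_or_ne l [] with rfl | hl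
    · show Valid (stp (0,0,0) c)
      cases c <;> simp [stp, Valid]
    · exact valid_stp (ih hl) c

def canon (a : M) (p : ℤ × ℤ × ℤ) : M :=
  canonN a p.2.2.toNat ((p.2.2 - p.1).toNat - 1) ((p.2.1 - p.1).toNat)

lemma main_lemma (a : M) : ∀ l : List Bool, l ≠ [] →
    wprod a l = canon a (wdata l) := by
  intro l
  induction l using List.reverseRecOn with
  | nil => intro h; exact absurd rfl h
  | append_singleton l c ih =>
    intro _
    rcases eq_or_ne l [] with rfl | hl
    · rw [show ([] ++ [c] : List Bool) = [c] from rfl]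
      cases c
      · -- single letter false : wprod = iv a, data = (-1,-1,0)
        show iv a = canon a (wdata [false])
        have hd : wdata [false] = (-1, -1, 0) := by simp [wdata, stp]
        rw [hd]
        show iv a = canonN a ((0:ℤ)).toNat (((0:ℤ) - (-1)).toNat - 1) (((-1:ℤ) - (-1)).toNat)
        norm_num
        rfl
      · show a = canon a (wdata [true])
        have hd : wdata [true] = (0, 1, 1) := by simp [wdata, stp]
        rw [hd]
        show a = canonN a ((1:ℤ)).toNat (((1:ℤ) - 0).toNat - 1) (((1:ℤ) - 0).toNat)
        norm_num
        show a = qw (pw a 1 (ppow (iv a) 0)) a 1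
        show a = (a * iv a) * a
        exact (mul_inv_mul a).symm
    · rw [wprod_concat a l c hl, ih hl, wdata_concat]
      have hv := valid_wdata l hl
      obtain ⟨m, t, Mx, hd⟩ : ∃ m t Mx, wdata l = (m, t, Mx) := ⟨_, _, _, rfl⟩
      rw [hd] at hv ⊢
      obtain ⟨h1, h2, h3, h4, h5⟩ := hv
      replace h1 : m ≤ 0 := h1
      replace h2 : (0:ℤ) ≤ Mx := h2
      replace h3 : m ≤ t := h3
      replace h4 : t ≤ Mx := h4
      replace h5 : m < Mx := h5
      cases c
      · -- multiply by inv a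
        show canon a (m, t, Mx) * iv a = canon a (stp (m, t, Mx) false)
        simp only [canon, stp]
        rcases eq_or_lt_of_le h3 with rfl | hmt
        · -- t = m
          have e0 : min m (m - 1) = m - 1 := by omega
          have e1 : (m - m).toNat = 0 := by omega
          have e2 : (Mx - (m - 1)).toNat - 1 = ((Mx - m).toNat - 1) + 1 := by omega
          have e3 : (m - 1 - (m - 1)).toNat = 0 := by omega
          rw [e0, e1, e2, e3]
          exact stepB2 a Mx.toNat ((Mx - m).toNat - 1)
        · -- m < t
          have e0 : min m (t - 1) = m := by omega
          have e1 : (t - m).toNat = (t - 1 - m).toNat + 1 := by omega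
          rw [e0, e1]
          exact stepB1 a Mx.toNat ((Mx - m).toNat - 1) ((t - 1 - m).toNat) (by omega)
      · -- multiply by a
        show canon a (m, t, Mx) * a = canon a (stp (m, t, Mx) true)
        simp only [canon, stp]
        rcases eq_or_lt_of_le h4 with rfl | htM
        · -- t = Mx
          have e0 : max t (t + 1) = t + 1 := by omega
          have e1 : (t - m).toNat = ((t - m).toNat - 1) + 1 := by omega
          have e2 : (t + 1).toNat = t.toNat + 1 := by omega
          have e3 : (t + 1 - m).toNat - 1 = ((t - m).toNat - 1) + 1 := by omega
          have e4 : (t + 1 - m).toNat = ((t - m).toNat - 1) + 2 := by omega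
          rw [e0, e1, e2, e3, e4]
          exact stepA2 a t.toNat ((t - m).toNat - 1)
        · -- t < Mx
          have e0 : max Mx (t + 1) = Mx := by omega
          have e1 : (t + 1 - m).toNat = (t - m).toNat + 1 := by omega
          rw [e0, e1]
          exact stepA1 a Mx.toNat ((Mx - m).toNat - 1) ((t - m).toNat)


/-! ### Terms to words -/

def toWord : InvTerm1 → List Bool
  | .x => [true]
  | .mul s t => toWord s ++ toWord t
  | .inv t => (toWord t).reverse.map (fun c => !c)

lemma toWord_ne_nil : ∀ s : InvTerm1, toWord s ≠ [] := by
  intro s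
  induction s with
  | x => simp [toWord]
  | mul s t ihs iht => simp [toWord, ihs]
  | inv t iht => simp [toWord, iht]

lemma eval_eq_wprod (a : M) : ∀ s : InvTerm1, s.eval a = wprod a (toWord s)
  | .x => rfl
  | .mul s t => by
    show s.eval a * t.eval a = wprod a (toWord s ++ toWord t)
    rw [eval_eq_wprod a s, eval_eq_wprod a t,
      wprod_append a _ _ (toWord_ne_nil s) (toWord_ne_nil t)]
  | .inv t => by
    show iv (t.eval a) = _
    rw [eval_eq_wprod a t, inv_wprod a _ (toWord_ne_nil t)]
    rfl

/-! ### The triple model -/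

def mulT (p q : ℤ × ℤ × ℤ) : ℤ × ℤ × ℤ :=
  (min p.1 (p.2.1 + q.1), p.2.1 + q.2.1, max p.2.2 (p.2.1 + q.2.2))

def invT (p : ℤ × ℤ × ℤ) : ℤ × ℤ × ℤ := (p.1 - p.2.1, -p.2.1, p.2.2 - p.2.1)

lemma valid_mulT {p q : ℤ × ℤ × ℤ} (hp : Valid p) (hq : Valid q) : Valid (mulT p q) := by
  obtain ⟨a1, a2, a3, a4, a5⟩ := hp; obtain ⟨b1, b2, b3, b4, b5⟩ := hq
  refine ⟨?_, ?_, ?_, ?_, ?_⟩ <;> simp [mulT] <;> omega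

lemma valid_invT {p : ℤ × ℤ × ℤ} (hp : Valid p) : Valid (invT p) := by
  obtain ⟨a1, a2, a3, a4, a5⟩ := hp
  refine ⟨?_, ?_, ?_, ?_, ?_⟩ <;> simp [invT] <;> omega

def Tm : Type := { p : ℤ × ℤ × ℤ // Valid p }

instance : Semigroup Tm where
  mul x y := ⟨mulT x.val y.val, valid_mulT x.property y.property⟩
  mul_assoc x y z := by
    apply Subtype.ext
    show mulT (mulT x.val y.val) z.val = mulT x.val (mulT y.val z.val)
    simp only [mulT, Prod.ext_iff]
    refine ⟨?_, ?_, ?_⟩ <;> (try simp) <;> omega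

instance : InverseSemigroup Tm where
  inv x := ⟨invT x.val, valid_invT x.property⟩
  inv_mul x y := by
    apply Subtype.ext
    show invT (mulT x.val y.val) = mulT (invT y.val) (invT x.val)
    simp only [mulT, invT, Prod.ext_iff]
    refine ⟨?_, ?_, ?_⟩ <;> (try simp) <;> omega
  inv_inv x := by
    apply Subtype.ext
    show invT (invT x.val) = x.val
    simp only [invT, Prod.ext_iff]
    refine ⟨?_, ?_, ?_⟩ <;> (try simp) <;> omega
  mul_inv_mul x := by
    apply Subtype.ext
    show mulT (mulT x.val (invT x.val)) x.val = x.val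
    simp only [mulT, invT, Prod.ext_iff]
    refine ⟨?_, ?_, ?_⟩ <;> (try simp) <;> omega
  idem_comm x y := by
    apply Subtype.ext
    show mulT (mulT (invT x.val) x.val) (mulT (invT y.val) y.val)
      = mulT (mulT (invT y.val) y.val) (mulT (invT x.val) x.val)
    simp only [mulT, invT, Prod.ext_iff]
    refine ⟨?_, ?_, ?_⟩ <;> (try simp) <;> omega

lemma mulTm (x y : Tm) : (x * y).val = mulT x.val y.val := rfl
lemma invTm (x : Tm) : (iv x).val = invT x.val := rfl


/-! ### ULift transfer and homomorphisms -/

instance uliftIS {γ : Type v} [InverseSemigroup γ] : InverseSemigroup (ULift.{w} γ) where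
  mul x y := ⟨x.down * y.down⟩
  mul_assoc x y z := congrArg ULift.up (mul_assoc x.down y.down z.down)
  inv x := ⟨iv x.down⟩
  inv_mul x y := congrArg ULift.up (inv_mul x.down y.down)
  inv_inv x := congrArg ULift.up (InverseSemigroup.inv_inv x.down)
  mul_inv_mul x := congrArg ULift.up (mul_inv_mul x.down)
  idem_comm x y := congrArg ULift.up (idem_comm x.down y.down)

lemma eval_hom {γ : Type v} {δ : Type w} [InverseSemigroup γ] [InverseSemigroup δ]
    (f : γ → δ) (hm : ∀ x y, f (x * y) = f x * f y) (hi : ∀ x, f (iv x) = iv (f x)) :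
    ∀ (s : InvTerm1) (a : γ), f (InvTerm1.eval a s) = InvTerm1.eval (f a) s := by
  intro s
  induction s with
  | x => intro a; rfl
  | mul s t ihs iht =>
    intro a
    show f (InvTerm1.eval a s * InvTerm1.eval a t) = _
    rw [hm, ihs, iht]
    rfl
  | inv t iht =>
    intro a
    show f (iv (InvTerm1.eval a t)) = _
    rw [hi, iht]
    rfl

lemma down_hom_mul {γ : Type v} [InverseSemigroup γ] (x y : ULift.{w} γ) :
    (x * y).down = x.down * y.down := rfl

lemma down_hom_inv {γ : Type v} [InverseSemigroup γ] (x : ULift.{w} γ) :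
    (iv x).down = iv x.down := rfl

/-! ### The additive model on ℤ -/

structure Zw : Type where
  z : ℤ

instance : InverseSemigroup Zw where
  mul x y := ⟨x.z + y.z⟩
  mul_assoc x y z := by cases x; cases y; cases z; simp [HMul.hMul, Mul.mul]; ring
  inv x := ⟨-x.z⟩
  inv_mul x y := by cases x; cases y; simp [HMul.hMul, Mul.mul]
  inv_inv x := by cases x; simp
  mul_inv_mul x := by cases x; simp [HMul.hMul, Mul.mul]
  idem_comm x y := by cases x; cases y; simp [HMul.hMul, Mul.mul]

lemma mulZw (x y : Zw) : (x * y).z = x.z + y.z := rfl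
lemma invZw (x : Zw) : (iv x).z = -x.z := rfl

lemma evalZw (s : InvTerm1) : ∀ zv : ℤ,
    (InvTerm1.eval (⟨zv⟩ : Zw) s).z = (InvTerm1.eval (⟨1⟩ : Zw) s).z * zv := by
  induction s with
  | x => intro zv; simp [InvTerm1.eval]
  | mul s t ihs iht =>
    intro zv
    show (InvTerm1.eval (⟨zv⟩ : Zw) s * InvTerm1.eval (⟨zv⟩ : Zw) t).z = _
    rw [mulZw, ihs, iht]
    show _ = (InvTerm1.eval (⟨1⟩ : Zw) s * InvTerm1.eval (⟨1⟩ : Zw) t).z * zv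
    rw [mulZw]
    ring
  | inv t iht =>
    intro zv
    show (iv (InvTerm1.eval (⟨zv⟩ : Zw) t)).z = (iv (InvTerm1.eval (⟨1⟩ : Zw) t)).z * zv
    rw [invZw, invZw, iht]
    ring


/-! ### Evaluation at the generator of the triple model -/

def gen : Tm := ⟨(0, 1, 1), by refine ⟨?_, ?_, ?_, ?_, ?_⟩ <;> norm_num⟩

lemma wprod_gen : ∀ l : List Bool, l ≠ [] → (wprod gen l).val = wdata l := by
  intro l
  induction l using List.reverseRecOn with
  | nil => intro h; exact absurd rfl h
  | append_singleton l c ih =>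
    intro _
    rw [wdata_concat]
    rcases eq_or_ne l [] with rfl | hl
    · rw [show ([] ++ [c] : List Bool) = [c] from rfl]
      cases c
      · show (iv gen).val = stp (0,0,0) false
        rw [invTm]
        simp [invT, stp, gen]
      · show gen.val = stp (0,0,0) true
        simp [stp, gen]
    · rw [wprod_concat gen l c hl, mulTm, ih hl]
      have hv := valid_wdata l hl
      obtain ⟨m, t, Mx, hd⟩ : ∃ m t Mx, wdata l = (m, t, Mx) := ⟨_, _, _, rfl⟩
      rw [hd] at hv ⊢
      obtain ⟨h1, h2, h3, h4, h5⟩ := hv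
      replace h1 : m ≤ 0 := h1
      replace h2 : (0:ℤ) ≤ Mx := h2
      replace h3 : m ≤ t := h3
      replace h4 : t ≤ Mx := h4
      replace h5 : m < Mx := h5
      cases c
      · have hg : (iv gen).val = (-1, -1, 0) := by rw [invTm]; norm_num [invT, gen]
        show mulT (m, t, Mx) (iv gen).val = stp (m, t, Mx) false
        rw [hg]
        simp [mulT, stp, Prod.ext_iff]
        try omega
      · show mulT (m, t, Mx) gen.val = stp (m, t, Mx) true
        rw [show gen.val = (0, 1, 1) from rfl]
        simp [mulT, stp, Prod.ext_iff]
        try omega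

lemma pw_eq_ppow (a : M) (n : ℕ) (x : M) : pw a (n+1) x = ppow a n * x := by
  induction n with
  | zero => rfl
  | succ n ih =>
    show a * pw a (n+1) x = ppow a (n+1) * x
    rw [ih, ← mul_assoc, ← ppow_succ]

lemma ppowT_pos (e : Tm) (mv Mv : ℤ) (he : e.val = (mv, 1, Mv)) :
    ∀ n : ℕ, (ppow e n).val = (mv, (n : ℤ) + 1, Mv + n) := by
  intro n
  induction n with
  | zero => simpa [ppow, pw] using he
  | succ n ih =>
    rw [ppow_succ, mulTm, he, ih]
    simp only [mulT, Prod.ext_iff]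
    refine ⟨?_, ?_, ?_⟩ <;> (try simp) <;> push_cast <;> omega

lemma ppowT_neg (e : Tm) (mv Mv : ℤ) (he : e.val = (mv, -1, Mv)) :
    ∀ n : ℕ, (ppow e n).val = (mv - n, -(n : ℤ) - 1, Mv) := by
  intro n
  induction n with
  | zero => simpa [ppow, pw] using he
  | succ n ih =>
    rw [ppow_succ, mulTm, he, ih]
    simp only [mulT, Prod.ext_iff]
    refine ⟨?_, ?_, ?_⟩ <;> (try simp) <;> push_cast <;> omega


lemma pw_zero (a x : M) : pw a 0 x = x := rfl
lemma qw_zero (x a : M) : qw x a 0 = x := rfl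

lemma canon_x (a : M) : canon a ((0:ℤ), (1:ℤ), (1:ℤ)) = a := by
  show canonN a ((1:ℤ)).toNat (((1:ℤ) - 0).toNat - 1) (((1:ℤ) - 0).toNat) = a
  norm_num
  show (a * iv a) * a = a
  exact mul_inv_mul a

lemma canon_inv (a : M) : canon a ((-1:ℤ), (-1:ℤ), (0:ℤ)) = iv a := by
  show canonN a ((0:ℤ)).toNat (((0:ℤ) - (-1)).toNat - 1) (((-1:ℤ) - (-1)).toNat) = iv a
  norm_num
  rfl

lemma canon_fix (m t Mx : ℤ) (hv : Valid (m, t, Mx)) (ht : t = 1 ∨ t = -1)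
    (A : Tm) (hA : A.val = (m, t, Mx))
    (heq : (canon A (m, t, Mx)).val = ((0:ℤ), (1:ℤ), (1:ℤ))) :
    (m, t, Mx) = ((0:ℤ), (1:ℤ), (1:ℤ)) ∨ (m, t, Mx) = ((-1:ℤ), (-1:ℤ), (0:ℤ)) := by
  obtain ⟨h1, h2, h3, h4, h5⟩ := hv
  replace h1 : m ≤ 0 := h1
  replace h2 : (0:ℤ) ≤ Mx := h2
  replace h3 : m ≤ t := h3
  replace h4 : t ≤ Mx := h4
  replace h5 : m < Mx := h5
  have heq' : (canonN A Mx.toNat ((Mx - m).toNat - 1) ((t - m).toNat)).val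
      = ((0:ℤ), (1:ℤ), (1:ℤ)) := heq
  unfold canonN at heq'
  rcases ht with rfl | rfl
  · -- t = 1
    have hB : (iv A).val = (m - 1, -1, Mx - 1) := by
      rw [invTm, hA]; simp [invT]
    have e1 : Mx.toNat = (Mx.toNat - 1) + 1 := by omega
    have e2 : (1 - m).toNat = ((1 - m).toNat - 1) + 1 := by omega
    rw [e1, e2, pw_eq_ppow, qw_eq, mulTm, mulTm,
      ppowT_pos A m Mx hA, ppowT_neg (iv A) (m - 1) (Mx - 1) hB,
      ppowT_pos A m Mx hA] at heq'
    simp only [mulT, Prod.ext_iff] at heq'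
    left
    have hmM : m = 0 ∧ Mx = 1 := by omega
    rw [hmM.1, hmM.2]
  · -- t = -1
    have hB : (iv A).val = (m + 1, 1, Mx + 1) := by
      rw [invTm, hA]; simp [invT]
    rcases eq_or_lt_of_le h2 with hM0 | hM1
    · -- Mx = 0
      rcases eq_or_lt_of_le h3 with hm1 | hm2
      · -- m = -1 : the good case
        right
        rw [← hm1, ← hM0]
      · -- m ≤ -2 : contradiction
        exfalso
        have e1 : Mx.toNat = 0 := by omega
        have e2 : (-1 - m).toNat = ((-1 - m).toNat - 1) + 1 := by omega
        rw [e1, e2, pw_zero, qw_eq, mulTm,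
          ppowT_pos (iv A) (m + 1) (Mx + 1) hB,
          ppowT_neg A m Mx hA] at heq'
        simp only [mulT, Prod.ext_iff] at heq'
        omega
    · -- Mx ≥ 1
      exfalso
      have e1 : Mx.toNat = (Mx.toNat - 1) + 1 := by omega
      rcases eq_or_lt_of_le h3 with hm1 | hm2
      · -- m = -1, j = 0
        have e2 : (-1 - m).toNat = 0 := by omega
        rw [e1, e2, pw_eq_ppow, qw_zero, mulTm,
          ppowT_neg A m Mx hA,
          ppowT_pos (iv A) (m + 1) (Mx + 1) hB] at heq'
        simp only [mulT, Prod.ext_iff] at heq'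
        omega
      · -- m ≤ -2
        have e2 : (-1 - m).toNat = ((-1 - m).toNat - 1) + 1 := by omega
        rw [e1, e2, pw_eq_ppow, qw_eq, mulTm, mulTm,
          ppowT_neg A m Mx hA,
          ppowT_pos (iv A) (m + 1) (Mx + 1) hB,
          ppowT_neg A m Mx hA] at heq'
        simp only [mulT, Prod.ext_iff] at heq'
        omega


end Stmt18

open Stmt18

/-- In the variety of inverse semigroups, if a unary term `u(x)`
satisfies the identity `u(u(x)) = x`, then `u(x)` is (as a term operation) equal to
`x` or to `x⁻¹`; in particular the only involutive unary term not equal to the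
identity is `x ↦ x⁻¹`. -/
theorem stmt18 (u : InvTerm1)
    (h : ∀ (M : Type u) [InverseSemigroup M] (a : M), InvTerm1.eval (u.eval a) u = a) :
    (∀ (M : Type u) [InverseSemigroup M] (a : M), u.eval a = a) ∨
    (∀ (M : Type u) [InverseSemigroup M] (a : M),
      u.eval a = InverseSemigroup.inv a) := by
  -- Step 1: in the additive model `Zw`, the coefficient of `u` squares to 1.
  have hz := h (ULift.{u} Zw) ⟨⟨1⟩⟩
  have hz' := congrArg ULift.down hz
  rw [eval_hom (ULift.down : ULift.{u} Zw → Zw) (fun _ _ => rfl) (fun _ => rfl) u,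
    eval_hom (ULift.down : ULift.{u} Zw → Zw) (fun _ _ => rfl) (fun _ => rfl) u] at hz'
  have hz2 := congrArg Zw.z hz'
  have hcz : (InvTerm1.eval (⟨1⟩ : Zw) u).z * (InvTerm1.eval (⟨1⟩ : Zw) u).z = 1 := by
    have := evalZw u (InvTerm1.eval (⟨1⟩ : Zw) u).z
    rw [show (⟨(InvTerm1.eval (⟨1⟩ : Zw) u).z⟩ : Zw) = InvTerm1.eval (⟨1⟩ : Zw) u from rfl]
      at this
    rw [this] at hz2
    exact hz2
  have hcz1 : (InvTerm1.eval (⟨1⟩ : Zw) u).z = 1 ∨ (InvTerm1.eval (⟨1⟩ : Zw) u).z = -1 :=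
    mul_self_eq_one_iff.mp hcz
  -- Step 2: evaluate in the triple model at the generator.
  have hT0 := h (ULift.{u} Tm) ⟨gen⟩
  have hT' := congrArg ULift.down hT0
  rw [eval_hom (ULift.down : ULift.{u} Tm → Tm) (fun _ _ => rfl) (fun _ => rfl) u,
    eval_hom (ULift.down : ULift.{u} Tm → Tm) (fun _ _ => rfl) (fun _ => rfl) u] at hT'
  -- hT' : InvTerm1.eval (InvTerm1.eval gen u) u = gen
  have hval : (InvTerm1.eval gen u).val = wdata (toWord u) := by
    rw [eval_eq_wprod gen u, wprod_gen _ (toWord_ne_nil u)]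
  have hvd := valid_wdata _ (toWord_ne_nil u)
  obtain ⟨m, t, Mx, hd⟩ : ∃ m t Mx, wdata (toWord u) = (m, t, Mx) := ⟨_, _, _, rfl⟩
  rw [hd] at hval hvd
  -- Step 3: t equals the additive coefficient, hence t = ±1.
  have hphi := eval_hom (fun p : Tm => (⟨p.val.2.1⟩ : Zw)) (fun _ _ => rfl) (fun _ => rfl)
    u gen
  rw [hval] at hphi
  have hphi2 := congrArg Zw.z hphi
  have htz : t = (InvTerm1.eval (⟨1⟩ : Zw) u).z := hphi2
  have ht : t = 1 ∨ t = -1 := by rcases hcz1 with h1 | h1 <;> [left; right] <;> omega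
  -- Step 4: the canonical-form equation in the triple model.
  have heval2 : InvTerm1.eval (InvTerm1.eval gen u) u = canon (InvTerm1.eval gen u) (m, t, Mx) := by
    rw [eval_eq_wprod (InvTerm1.eval gen u) u,
      main_lemma (InvTerm1.eval gen u) _ (toWord_ne_nil u), hd]
  have heq : (canon (InvTerm1.eval gen u) (m, t, Mx)).val = ((0:ℤ), (1:ℤ), (1:ℤ)) := by
    rw [← heval2, hT']
    rfl
  rcases canon_fix m t Mx hvd ht (InvTerm1.eval gen u) hval heq with hgood | hgood
  · left
    intro N instN a
    rw [eval_eq_wprod a u, main_lemma a _ (toWord_ne_nil u), hd, hgood]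
    exact canon_x a
  · right
    intro N instN a
    rw [eval_eq_wprod a u, main_lemma a _ (toWord_ne_nil u), hd, hgood]
    exact canon_inv a
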